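/- Assume (U(x) − U_c)/(x_U − x)^{c−1} → U_0 as x → x_U⁻, where 1 < c < 2 and U_0 < 0. Fix s ≥ 0 with s·x_U·U_c²·V'(w_c·x_U) < |U_0|, and for x ∈ (0, x_U) set w(x) = w_c + s·(x_U − x)^{c−1}. Then the Poland–Scheraga generating function Z(x, w) = V(w·x)/(1 − U(x)·V(w·x)) satisfies lim_{x→x_U⁻} (x_U − x)^{c−1} · Z(x, w(x)) = 1/( |U_0| − U_c²·V'(w_c·x_U)·x_U·s ). That is, near the critical point Z(x, w) ≈ (x_U − x)^{−(c−1)}·F(s) with crossover exponent φ = c − 1 and scaling function F(s) = 1/(|U_0| − U_c² V'(w_c x_U) x_U s). -/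

import Mathlib

open Filter Topology Set


lemma aux_diff_tsum (b : ℕ → ℝ) (hb : ∀ n, 0 ≤ b n) (xV A : ℝ) (hA0 : 0 < A) (hA : A < xV)
    (hVconv : ∀ x : ℝ, 0 ≤ x → x < xV → Summable fun n => b n * x ^ n) :
    DifferentiableAt ℝ (fun x : ℝ => ∑' n, b n * x ^ n) A := by
  obtain ⟨r, hAr, hrxV⟩ := exists_between hA
  obtain ⟨r', hrr', hr'xV⟩ := exists_between hrxV
  have hr0 : 0 < r := lt_trans hA0 hAr
  have hr'0 : 0 < r' := lt_trans hr0 hrr'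
  have hq1 : r / r' < 1 := (div_lt_one hr'0).mpr hrr'
  have hq0 : 0 ≤ r / r' := div_nonneg hr0.le hr'0.le
  have hsum' : Summable fun n => b n * r' ^ n := hVconv r' hr'0.le hr'xV
  set C : ℝ := ∑' n, b n * r' ^ n with hC
  have hC0 : 0 ≤ C := tsum_nonneg fun i => mul_nonneg (hb i) (pow_nonneg hr'0.le i)
  have hCle : ∀ n, b n * r' ^ n ≤ C := fun n =>
    hsum'.le_tsum n (fun i _ => mul_nonneg (hb i) (pow_nonneg hr'0.le i))
  have hgeo : Summable fun n : ℕ => (n : ℝ) ^ 1 * (r / r') ^ n :=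
    summable_pow_mul_geometric_of_norm_lt_one 1 (by rwa [Real.norm_eq_abs, abs_of_nonneg hq0])
  have hu : Summable fun n : ℕ => C / r * ((n : ℝ) * (r / r') ^ n) := by
    simpa [pow_one] using hgeo.mul_left (C / r)
  have key : HasDerivAt (fun x : ℝ => ∑' n, b n * x ^ n)
      (∑' n, b n * ((n : ℕ) * A ^ ((n : ℕ) - 1))) A := by
    apply hasDerivAt_tsum_of_isPreconnected hu (isOpen_Ioo (a := -r) (b := r))
      (isPreconnected_Ioo) (g := fun n x => b n * x ^ n)
      (g' := fun n y => b n * ((n : ℕ) * y ^ ((n : ℕ) - 1)))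
      (y₀ := A)
    · intro n y _
      exact (hasDerivAt_pow n y).const_mul (b n)
    · intro n y hy
      have hyr : |y| ≤ r := abs_le.mpr ⟨by linarith [hy.1], le_of_lt hy.2⟩
      have h1 : ‖b n * (↑n * y ^ (n - 1))‖ ≤ b n * ↑n * r ^ (n - 1) := by
        rw [Real.norm_eq_abs, abs_mul, abs_mul, abs_of_nonneg (hb n), Nat.abs_cast, abs_pow,
          ← mul_assoc]
        gcongr
        all_goals first
          | exact mul_nonneg (hb n) (Nat.cast_nonneg n)
          | exact abs_nonneg y
      refine h1.trans ?_
      rcases Nat.eq_zero_or_pos n with h | h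
      · simp [h]
      · have hyn : b n * r ^ n ≤ C * (r / r') ^ n := by
          have e1 : b n * r ^ n = (b n * r' ^ n) * (r / r') ^ n := by
            have h2 : (r' : ℝ) ^ n ≠ 0 := pow_ne_zero n hr'0.ne'
            rw [div_pow, mul_assoc, mul_comm (r' ^ n), div_mul_cancel₀ _ h2]
          rw [e1]
          exact mul_le_mul_of_nonneg_right (hCle n) (pow_nonneg hq0 n)
        have hrpow : r ^ (n - 1) = r ^ n / r := by
          rw [eq_div_iff hr0.ne', ← pow_succ, Nat.sub_add_cancel h]
        calc b n * ↑n * r ^ (n - 1) = ↑n / r * (b n * r ^ n) := by rw [hrpow]; ring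
          _ ≤ ↑n / r * (C * (r / r') ^ n) :=
              mul_le_mul_of_nonneg_left hyn (div_nonneg (Nat.cast_nonneg n) hr0.le)
          _ = C / r * (↑n * (r / r') ^ n) := by ring
    · exact ⟨by linarith, hAr⟩
    · exact hVconv A hA0.le (lt_trans hAr (lt_trans hrr' hr'xV))
    · exact ⟨by linarith, hAr⟩
  exact key.differentiableAt

theorem stmt_12
    (p b : ℕ → ℝ)
    (hp : ∀ n, 0 ≤ p n) (hp0 : p 0 = 0)
    (hb : ∀ n, 0 ≤ b n) (hb0 : 0 < b 0)
    (hpN : ∃ N, 1 ≤ N ∧ 0 < p N) (hbM : ∃ M, 1 ≤ M ∧ 0 < b M)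
    (U V : ℝ → ℝ)
    (hU : ∀ x, U x = ∑' n, p n * x ^ n)
    (hV : ∀ x, V x = ∑' n, b n * x ^ n)
    (xU xV : ℝ) (hxU0 : 0 < xU) (hxUV : xU < xV) (hxV1 : xV ≤ 1)
    (hUconv : ∀ x : ℝ, 0 ≤ x → x < xU → Summable fun n => p n * x ^ n)
    (hUdiv : ∀ x : ℝ, xU < x → ¬ Summable fun n => p n * x ^ n)
    (hVconv : ∀ x : ℝ, 0 ≤ x → x < xV → Summable fun n => b n * x ^ n)
    (hVdiv : ∀ x : ℝ, xV < x → ¬ Summable fun n => b n * x ^ n)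
    (hVinf : Filter.Tendsto V (𝓝[<] xV) Filter.atTop)
    (Uc : ℝ) (hUc : Filter.Tendsto U (𝓝[<] xU) (𝓝 Uc))
    (c U0 : ℝ) (hc1 : 1 < c) (hc2 : c < 2) (hU0neg : U0 < 0)
    (hU0 : Filter.Tendsto (fun x => (U x - Uc) / (xU - x) ^ (c - 1))
      (𝓝[<] xU) (𝓝 U0))
    (wc : ℝ) (hwc1 : 1 ≤ wc) (hwc2 : wc < xV / xU)
    (hwceq : Uc * V (wc * xU) = 1)
    (s : ℝ) (hs : 0 ≤ s)
    (hslt : s * xU * Uc ^ 2 * deriv V (wc * xU) < |U0|) :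
    Filter.Tendsto
      (fun x => (xU - x) ^ (c - 1) *
        (V ((wc + s * (xU - x) ^ (c - 1)) * x) /
          (1 - U x * V ((wc + s * (xU - x) ^ (c - 1)) * x))))
      (𝓝[<] xU)
      (𝓝 (1 / (|U0| - Uc ^ 2 * deriv V (wc * xU) * xU * s))) := by
  have hA0 : 0 < wc * xU := mul_pos (lt_of_lt_of_le one_pos hwc1) hxU0
  have hAxV : wc * xU < xV := (lt_div_iff₀ hxU0).mp hwc2
  -- differentiability of V at A := wc * xU
  have hVfun : V = fun x : ℝ => ∑' n, b n * x ^ n := funext hV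
  have hdiff : DifferentiableAt ℝ V (wc * xU) := by
    rw [hVfun]; exact aux_diff_tsum b hb xV (wc * xU) hA0 hAxV hVconv
  set d : ℝ := deriv V (wc * xU) with hd_def
  have hd : HasDerivAt V d (wc * xU) := hdiff.hasDerivAt
  -- positivity of V A and Uc
  have hVApos : 0 < V (wc * xU) := by
    rw [hV]
    have hsumA : Summable fun n => b n * (wc * xU) ^ n := hVconv _ hA0.le hAxV
    have h0 : b 0 * (wc * xU) ^ 0 ≤ ∑' n, b n * (wc * xU) ^ n :=
      hsumA.le_tsum 0 (fun i _ => mul_nonneg (hb i) (pow_nonneg hA0.le i))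
    simpa using lt_of_lt_of_le (by simpa using hb0) h0
  have hUcpos : 0 < Uc := by nlinarith [hwceq, hVApos]
  have hUcne : Uc ≠ 0 := hUcpos.ne'
  set l : Filter ℝ := 𝓝[<] xU with hl
  set ε : ℝ → ℝ := fun x => (xU - x) ^ (c - 1) with hε
  set g : ℝ → ℝ := fun x => (wc + s * ε x) * x with hg
  have hc10 : (0:ℝ) < c - 1 := by linarith
  have h2c : (0:ℝ) < 2 - c := by linarith
  -- basic limits
  have Tsub : Tendsto (fun x : ℝ => xU - x) l (𝓝 0) := by
    have : Tendsto (fun x : ℝ => xU - x) (𝓝 xU) (𝓝 (xU - xU)) :=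
      (continuous_const.sub continuous_id).tendsto xU
    simpa using this.mono_left nhdsWithin_le_nhds
  have Trpow : ∀ q : ℝ, 0 < q → Tendsto (fun x : ℝ => (xU - x) ^ q) l (𝓝 0) := by
    intro q hq
    have hcont : ContinuousAt (fun t : ℝ => t ^ q) 0 :=
      Real.continuousAt_rpow_const 0 q (Or.inr hq.le)
    have := hcont.tendsto.comp Tsub
    simpa [Function.comp_def, Real.zero_rpow hq.ne'] using this
  have Tε : Tendsto ε l (𝓝 0) := Trpow (c - 1) hc10
  have T2c : Tendsto (fun x : ℝ => (xU - x) ^ (2 - c)) l (𝓝 0) := Trpow (2 - c) h2c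
  have Tid : Tendsto (fun x : ℝ => x) l (𝓝 xU) := tendsto_id.mono_left nhdsWithin_le_nhds
  have hεpos : ∀ x ∈ Iio xU, 0 < ε x := fun x hx =>
    Real.rpow_pos_of_pos (sub_pos.mpr hx) _
  -- g → A
  have Tg : Tendsto g l (𝓝 (wc * xU)) := by
    have h1 : Tendsto (fun x => (wc + s * ε x) * x) l (𝓝 ((wc + s * 0) * xU)) :=
      (tendsto_const_nhds.add (Tε.const_mul s)).mul Tid
    simpa using h1
  -- ratio (g x - A)/ε x → s * xU
  have Tratio : Tendsto (fun x => (g x - wc * xU) / ε x) l (𝓝 (s * xU)) := by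
    have heq : ∀ x ∈ Iio xU,
        (g x - wc * xU) / ε x = s * x - wc * (xU - x) ^ (2 - c) := by
      intro x hx
      have hxx : 0 < xU - x := sub_pos.mpr hx
      have hεne : ε x ≠ 0 := (hεpos x hx).ne'
      have hpow : (xU - x) ^ (2 - c) = (xU - x) / ε x := by
        rw [hε]
        rw [show (2 - c : ℝ) = 1 - (c - 1) by ring, Real.rpow_sub hxx, Real.rpow_one]
      rw [hpow]
      field_simp
      ring
    have h1 : Tendsto (fun x => s * x - wc * (xU - x) ^ (2 - c)) l (𝓝 (s * xU - wc * 0)) :=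
      (Tid.const_mul s).sub (T2c.const_mul wc)
    rw [show s * xU = s * xU - wc * 0 by ring]
    exact h1.congr' (eventually_nhdsWithin_of_forall (fun x hx => (heq x hx).symm))
  -- V (g x) → V A
  have TVg : Tendsto (fun x => V (g x)) l (𝓝 (V (wc * xU))) :=
    (hd.continuousAt.tendsto).comp Tg
  -- littleO expansion of V at A composed with g
  have Tslope : Tendsto (fun x => (V (g x) - V (wc * xU)) / ε x) l (𝓝 (s * xU * d)) := by
    have hlo : (fun y => V y - V (wc * xU) - (y - wc * xU) * d)
        =o[𝓝 (wc * xU)] fun y => y - wc * xU := by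
      have := hasDerivAt_iff_isLittleO.mp hd
      simpa [smul_eq_mul] using this
    have hlo2 : (fun x => V (g x) - V (wc * xU) - (g x - wc * xU) * d)
        =o[l] fun x => g x - wc * xU := hlo.comp_tendsto Tg
    have hBigO : (fun x => g x - wc * xU) =O[l] ε := by
      have h1 : (fun x => (g x - wc * xU) / ε x) =O[l] (fun _ => (1:ℝ)) :=
        Tratio.isBigO_one ℝ
      have h2 : (fun x => (g x - wc * xU) / ε x * ε x) =O[l] (fun x => (1:ℝ) * ε x) :=
        h1.mul (Asymptotics.isBigO_refl ε l)
      have h3 : ∀ x ∈ Iio xU, (g x - wc * xU) / ε x * ε x = g x - wc * xU := by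
        intro x hx
        exact div_mul_cancel₀ _ (hεpos x hx).ne'
      refine Asymptotics.IsBigO.congr' ?_ (eventually_nhdsWithin_of_forall h3)
        (Filter.Eventually.of_forall (fun x => one_mul (ε x))) |>.trans ?_
      · exact h2
      · exact Asymptotics.isBigO_refl ε l
    have hsmall : (fun x => V (g x) - V (wc * xU) - (g x - wc * xU) * d) =o[l] ε :=
      hlo2.trans_isBigO hBigO
    have h0 : Tendsto (fun x => (V (g x) - V (wc * xU) - (g x - wc * xU) * d) / ε x)
        l (𝓝 0) := hsmall.tendsto_div_nhds_zero
    have h1 : Tendsto (fun x => (V (g x) - V (wc * xU) - (g x - wc * xU) * d) / ε x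
        + (g x - wc * xU) / ε x * d) l (𝓝 (0 + s * xU * d)) :=
      h0.add (Tratio.mul_const d)
    rw [show s * xU * d = 0 + s * xU * d by ring]
    refine h1.congr (fun x => ?_)
    ring
  -- limit of the normalized denominator
  have TD : Tendsto (fun x => (1 - U x * V (g x)) / ε x) l
      (𝓝 (-(U0 * V (wc * xU) + Uc * (s * xU * d)))) := by
    have h1 : Tendsto (fun x => -((U x - Uc) / ε x * V (g x)
        + Uc * ((V (g x) - V (wc * xU)) / ε x))) l
        (𝓝 (-(U0 * V (wc * xU) + Uc * (s * xU * d)))) :=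
      ((hU0.mul TVg).add (Tslope.const_mul Uc)).neg
    refine h1.congr (fun x => ?_)
    rw [show (1:ℝ) = Uc * V (wc * xU) from hwceq.symm]
    ring
  set L : ℝ := -(U0 * V (wc * xU) + Uc * (s * xU * d)) with hL
  have hUcL : Uc * L = |U0| - Uc ^ 2 * d * xU * s := by
    rw [hL, abs_of_neg hU0neg]
    linear_combination (-U0) * hwceq
  have hLpos : 0 < L := by
    have h1 : 0 < |U0| - Uc ^ 2 * d * xU * s := by nlinarith [hslt]
    nlinarith [hUcL, hUcpos]
  have Tfinal : Tendsto (fun x => V (g x) / ((1 - U x * V (g x)) / ε x)) l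
      (𝓝 (V (wc * xU) / L)) := TVg.div TD hLpos.ne'
  have hval : V (wc * xU) / L = 1 / (|U0| - Uc ^ 2 * d * xU * s) := by
    rw [← hUcL, div_eq_div_iff hLpos.ne' (mul_pos hUcpos hLpos).ne']
    linear_combination L * hwceq
  rw [← hval]
  refine Tfinal.congr (fun x => ?_)
  rw [div_div_eq_mul_div]
  ring
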